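/- Let π = (π₁, π₂) and π' = (π₁', π₂') be fully supported strategy profiles and r = (r₁, r₂) an interior reference profile. Then Σ_{i=1}^{2} Σ_{a∈A_i} r_i(a) ( √(π_i(a)/π'_i(a)) − √(π'_i(a)/π_i(a)) )² ≥ ( min_{i∈{1,2}, a∈A_i} r_i(a)/π'_i(a) ) · KL(π', π). -/
import Mathlib


open Finset Real

noncomputable section

/-- `p` is a point of the probability simplex over `A`. -/
def isSimplex {A : Type*} [Fintype A] (p : A → ℝ) : Prop :=
  (∀ a, 0 ≤ p a) ∧ ∑ a, p a = 1

/-- `p` is a point of the relative interior of the probability simplex over `A`. -/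
def isInterior {A : Type*} [Fintype A] (p : A → ℝ) : Prop :=
  (∀ a, 0 < p a) ∧ ∑ a, p a = 1

/-- Player 1's expected utility in the zero-sum game with payoff `u`. -/
def v1 {A1 A2 : Type*} [Fintype A1] [Fintype A2] (u : A1 → A2 → ℝ)
    (x : A1 → ℝ) (y : A2 → ℝ) : ℝ :=
  ∑ a, ∑ b, x a * y b * u a b

/-- Player 1's conditional expected utility of action `a` against `y`. -/
def q1 {A1 A2 : Type*} [Fintype A2] (u : A1 → A2 → ℝ) (y : A2 → ℝ) (a : A1) : ℝ :=
  ∑ b, y b * u a b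

/-- Player 2's conditional expected utility of action `b` against `x` (utility `-u`). -/
def q2 {A1 A2 : Type*} [Fintype A1] (u : A1 → A2 → ℝ) (x : A1 → ℝ) (b : A2) : ℝ :=
  ∑ a, x a * (- u a b)

/-- Kullback–Leibler divergence. -/
def KL {A : Type*} [Fintype A] (p q : A → ℝ) : ℝ :=
  ∑ a, p a * Real.log (p a / q a)

/-- Sum of KL divergences over the two players. -/
def KL2 {A1 A2 : Type*} [Fintype A1] [Fintype A2]
    (σ σ' : (A1 → ℝ) × (A2 → ℝ)) : ℝ :=
  KL σ.1 σ'.1 + KL σ.2 σ'.2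

/-- `σ` is a stationary point of the replicator-mutator dynamics with mutation
rate `μ` and reference profile `r`. -/
def isStationary {A1 A2 : Type*} [Fintype A1] [Fintype A2] (u : A1 → A2 → ℝ) (μ : ℝ)
    (r σ : (A1 → ℝ) × (A2 → ℝ)) : Prop :=
  isSimplex σ.1 ∧ isSimplex σ.2 ∧
  (∀ a, σ.1 a * (q1 u σ.2 a - v1 u σ.1 σ.2) + μ * (r.1 a - σ.1 a) = 0) ∧
  (∀ b, σ.2 b * (q2 u σ.1 b - (- v1 u σ.1 σ.2)) + μ * (r.2 b - σ.2 b) = 0)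

/-- One multiplicative-weights step with learning rate `η` and gain vector `g`. -/
def mwuStep {A : Type*} [Fintype A] (η : ℝ) (g p : A → ℝ) : A → ℝ :=
  fun a => p a * Real.exp (η * g a) / ∑ a', p a' * Real.exp (η * g a')

/-- Player 1's mutation gradient. -/
def qmu1 {A1 A2 : Type*} [Fintype A2] (u : A1 → A2 → ℝ) (μ : ℝ) (r1 : A1 → ℝ)
    (x : A1 → ℝ) (y : A2 → ℝ) (a : A1) : ℝ :=
  q1 u y a + μ / x a * (r1 a - x a)

/-- Player 2's mutation gradient. -/
def qmu2 {A1 A2 : Type*} [Fintype A1] (u : A1 → A2 → ℝ) (μ : ℝ) (r2 : A2 → ℝ)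
    (x : A1 → ℝ) (y : A2 → ℝ) (b : A2) : ℝ :=
  q2 u x b + μ / y b * (r2 b - y b)

/-- `σ` is a trajectory of M2WU with full feedback, learning rates `η`. -/
def isM2WU {A1 A2 : Type*} [Fintype A1] [Fintype A2] (u : A1 → A2 → ℝ) (μ : ℝ)
    (r : (A1 → ℝ) × (A2 → ℝ)) (η : ℕ → ℝ) (σ : ℕ → (A1 → ℝ) × (A2 → ℝ)) : Prop :=
  ∀ t, (σ (t+1)).1 = mwuStep (η t) (qmu1 u μ r.1 (σ t).1 (σ t).2) (σ t).1 ∧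
       (σ (t+1)).2 = mwuStep (η t) (qmu2 u μ r.2 (σ t).1 (σ t).2) (σ t).2

/-- Exploitability of a strategy profile. -/
def explt {A1 A2 : Type*} [Fintype A1] [Fintype A2] (u : A1 → A2 → ℝ)
    (σ : (A1 → ℝ) × (A2 → ℝ)) : ℝ :=
  (⨆ x : {p : A1 → ℝ // isSimplex p}, v1 u x.1 σ.2) +
  (⨆ y : {p : A2 → ℝ // isSimplex p}, - v1 u σ.1 y.1)

/-- Nash equilibrium of the two-player zero-sum game with payoff `u`. -/
def isNash {A1 A2 : Type*} [Fintype A1] [Fintype A2] (u : A1 → A2 → ℝ)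
    (σ : (A1 → ℝ) × (A2 → ℝ)) : Prop :=
  isSimplex σ.1 ∧ isSimplex σ.2 ∧
  (∀ y, isSimplex y → v1 u σ.1 σ.2 ≤ v1 u σ.1 y) ∧
  (∀ x, isSimplex x → v1 u x σ.2 ≤ v1 u σ.1 σ.2)

/-- ℓ¹ norm of a finitely supported vector. -/
def l1norm {A : Type*} [Fintype A] (p : A → ℝ) : ℝ := ∑ a, |p a|

/-- Euclidean distance between two profiles (concatenated coordinates). -/
def dist2 {A1 A2 : Type*} [Fintype A1] [Fintype A2]
    (σ σ' : (A1 → ℝ) × (A2 → ℝ)) : ℝ :=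
  Real.sqrt ((∑ a, (σ.1 a - σ'.1 a) ^ 2) + (∑ b, (σ.2 b - σ'.2 b) ^ 2))
lemma KL_nonneg' {A : Type*} [Fintype A] (p q : A → ℝ)
    (hp : ∀ a, 0 < p a) (hq : ∀ a, 0 < q a)
    (hsp : ∑ a, p a = 1) (hsq : ∑ a, q a = 1) : 0 ≤ KL q p := by
  have key : ∀ a : A, q a - p a ≤ q a * Real.log (q a / p a) := by
    intro a
    have h1 : Real.log (p a / q a) ≤ p a / q a - 1 :=
      Real.log_le_sub_one_of_pos (div_pos (hp a) (hq a))
    have h2 : Real.log (p a / q a) = - Real.log (q a / p a) := by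
      rw [← Real.log_inv]; congr 1
      field_simp
    have h3 : 1 - p a / q a ≤ Real.log (q a / p a) := by linarith
    have h4 : q a * (1 - p a / q a) = q a - p a := by
      have hqa := (hq a).ne'
      field_simp
    calc q a - p a = q a * (1 - p a / q a) := h4.symm
      _ ≤ q a * Real.log (q a / p a) := mul_le_mul_of_nonneg_left h3 (hq a).le
  have : ∑ a, (q a - p a) ≤ ∑ a, q a * Real.log (q a / p a) :=
    Finset.sum_le_sum fun a _ => key a
  simpa [KL, Finset.sum_sub_distrib, hsp, hsq] using this

lemma kl_aux {A : Type*} [Fintype A] [Nonempty A] (p q w : A → ℝ)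
    (hp : ∀ a, 0 < p a) (hq : ∀ a, 0 < q a) (hw : ∀ a, 0 < w a)
    (hsp : ∑ a, p a = 1) (hsq : ∑ a, q a = 1) :
    (⨅ a, w a / q a) * KL q p ≤
      ∑ a, w a * (Real.sqrt (p a / q a) - Real.sqrt (q a / p a)) ^ 2 := by
  set c := ⨅ a, w a / q a with hc
  have hc0 : 0 ≤ c := le_ciInf fun a => div_nonneg (hw a).le (hq a).le
  have hcle : ∀ a, c ≤ w a / q a := fun a => ciInf_le (Finite.bddBelow_range _) a
  -- Step 1: KL q p ≤ ∑ (q-p)^2/p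
  have hKL : KL q p ≤ ∑ a, (q a - p a) ^ 2 / p a := by
    have key : ∀ a : A, q a * Real.log (q a / p a) ≤ (q a - p a) ^ 2 / p a + (q a - p a) := by
      intro a
      have h1 : Real.log (q a / p a) ≤ q a / p a - 1 :=
        Real.log_le_sub_one_of_pos (div_pos (hq a) (hp a))
      have hpa := (hp a).ne'
      have h2 : q a * (q a / p a - 1) = (q a - p a) ^ 2 / p a + (q a - p a) := by
        field_simp; ring
      nlinarith [hq a, mul_le_mul_of_nonneg_left h1 (hq a).le]
    calc KL q p ≤ ∑ a, ((q a - p a) ^ 2 / p a + (q a - p a)) :=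
          Finset.sum_le_sum fun a _ => key a
      _ = ∑ a, (q a - p a) ^ 2 / p a := by
          rw [Finset.sum_add_distrib, Finset.sum_sub_distrib, hsp, hsq]; ring
  -- Step 2: pointwise identity
  have key2 : ∀ a : A, w a / q a * ((q a - p a) ^ 2 / p a) =
      w a * (Real.sqrt (p a / q a) - Real.sqrt (q a / p a)) ^ 2 := by
    intro a
    have hpa := hp a
    have hqa := hq a
    have e1 : (Real.sqrt (p a / q a) - Real.sqrt (q a / p a)) ^ 2 =
        p a / q a + q a / p a - 2 := by
      have hs1 : Real.sqrt (p a / q a) ^ 2 = p a / q a :=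
        Real.sq_sqrt (by positivity)
      have hs2 : Real.sqrt (q a / p a) ^ 2 = q a / p a :=
        Real.sq_sqrt (by positivity)
      have hs3 : Real.sqrt (p a / q a) * Real.sqrt (q a / p a) = 1 := by
        rw [← Real.sqrt_mul (by positivity)]
        have : p a / q a * (q a / p a) = 1 := by field_simp
        rw [this, Real.sqrt_one]
      nlinarith [hs1, hs2, hs3]
    have hqa := (hq a).ne'
    have hpa := (hp a).ne'
    rw [e1]
    field_simp
    ring_nf
    try exact Or.inl trivial
  calc c * KL q p ≤ c * ∑ a, (q a - p a) ^ 2 / p a :=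
        mul_le_mul_of_nonneg_left hKL hc0
    _ = ∑ a, c * ((q a - p a) ^ 2 / p a) := Finset.mul_sum _ _ _
    _ ≤ ∑ a, w a / q a * ((q a - p a) ^ 2 / p a) := by
        refine Finset.sum_le_sum fun a _ => ?_
        exact mul_le_mul_of_nonneg_right (hcle a) (div_nonneg (sq_nonneg _) (hp a).le)
    _ = _ := Finset.sum_congr rfl fun a _ => key2 a

/-- **The weighted quasi-metric lower-bounds the KL divergence.** -/
theorem quasi_metric_lower_bound_kl {A1 A2 : Type*} [Fintype A1] [Fintype A2]
    [Nonempty A1] [Nonempty A2]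
    (σ σ' r : (A1 → ℝ) × (A2 → ℝ))
    (hσ1 : isInterior σ.1) (hσ2 : isInterior σ.2)
    (hσ1' : isInterior σ'.1) (hσ2' : isInterior σ'.2)
    (hr1 : isInterior r.1) (hr2 : isInterior r.2) :
    (min (⨅ a, r.1 a / σ'.1 a) (⨅ b, r.2 b / σ'.2 b)) * KL2 σ' σ ≤
      (∑ a, r.1 a * (Real.sqrt (σ.1 a / σ'.1 a) - Real.sqrt (σ'.1 a / σ.1 a)) ^ 2) +
      (∑ b, r.2 b * (Real.sqrt (σ.2 b / σ'.2 b) - Real.sqrt (σ'.2 b / σ.2 b)) ^ 2) := by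
  obtain ⟨hσ1p, hσ1s⟩ := hσ1
  obtain ⟨hσ2p, hσ2s⟩ := hσ2
  obtain ⟨hσ1p', hσ1s'⟩ := hσ1'
  obtain ⟨hσ2p', hσ2s'⟩ := hσ2'
  obtain ⟨hr1p, hr1s⟩ := hr1
  obtain ⟨hr2p, hr2s⟩ := hr2
  have h1 := kl_aux σ.1 σ'.1 r.1 hσ1p hσ1p' hr1p hσ1s hσ1s'
  have h2 := kl_aux σ.2 σ'.2 r.2 hσ2p hσ2p' hr2p hσ2s hσ2s'
  have hKL1 : 0 ≤ KL σ'.1 σ.1 := KL_nonneg' σ.1 σ'.1 hσ1p hσ1p' hσ1s hσ1s'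
  have hKL2 : 0 ≤ KL σ'.2 σ.2 := KL_nonneg' σ.2 σ'.2 hσ2p hσ2p' hσ2s hσ2s'
  have m1 : min (⨅ a, r.1 a / σ'.1 a) (⨅ b, r.2 b / σ'.2 b) * KL σ'.1 σ.1 ≤
      (⨅ a, r.1 a / σ'.1 a) * KL σ'.1 σ.1 :=
    mul_le_mul_of_nonneg_right (min_le_left _ _) hKL1
  have m2 : min (⨅ a, r.1 a / σ'.1 a) (⨅ b, r.2 b / σ'.2 b) * KL σ'.2 σ.2 ≤
      (⨅ b, r.2 b / σ'.2 b) * KL σ'.2 σ.2 :=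
    mul_le_mul_of_nonneg_right (min_le_right _ _) hKL2
  have : min (⨅ a, r.1 a / σ'.1 a) (⨅ b, r.2 b / σ'.2 b) * KL2 σ' σ =
      min (⨅ a, r.1 a / σ'.1 a) (⨅ b, r.2 b / σ'.2 b) * KL σ'.1 σ.1 +
      min (⨅ a, r.1 a / σ'.1 a) (⨅ b, r.2 b / σ'.2 b) * KL σ'.2 σ.2 := by
    rw [KL2, mul_add]
  rw [this]
  exact add_le_add (le_trans m1 h1) (le_trans m2 h2)
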